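/- The supercore of an abstract game (the intersection of all its subsolutions) equals the grounded extension of the corresponding argumentation framework, i.e., the least fixed point of the defence function d, which is the ⊆-least complete extension. -/
import Mathlib


def attacked {A : Type*} (R : A → A → Prop) (S : Set A) : Set A :=
  {b | ∃ a ∈ S, R a b}

def neutrality {A : Type*} (R : A → A → Prop) (S : Set A) : Set A :=
  (attacked R S)ᶜ

def defence {A : Type*} (R : A → A → Prop) (S : Set A) : Set A :=
  {a | ∀ b, R b a → b ∈ attacked R S}

def unattacked {A : Type*} (R : A → A → Prop) : Set A :=
  {a | ∀ b, ¬ R b a}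

def conflictFree {A : Type*} (R : A → A → Prop) (S : Set A) : Prop :=
  S ⊆ neutrality R S

def complete {A : Type*} (R : A → A → Prop) (S : Set A) : Prop :=
  conflictFree R S ∧ S ⊆ defence R S ∧ defence R S ⊆ S

def subsolution {A : Type*} (R : A → A → Prop) (S : Set A) : Prop :=
  S ⊆ neutrality R S ∧ S = neutrality R (neutrality R S)

def stableExt {A : Type*} (R : A → A → Prop) (S : Set A) : Prop :=
  S = neutrality R S

def preferred {A : Type*} (R : A → A → Prop) (S : Set A) : Prop :=
  complete R S ∧ ∀ T, complete R T → S ⊆ T → S = T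

section Aux

variable {A : Type*} (R : A → A → Prop)

lemma neut_neut (S : Set A) : neutrality R (neutrality R S) = defence R S := by
  ext a
  simp only [neutrality, defence, attacked, Set.mem_compl_iff, Set.mem_setOf_eq]
  constructor
  · intro h b hba
    by_contra hb
    exact h ⟨b, hb, hba⟩
  · rintro h ⟨b, hb, hba⟩
    exact hb (h b hba)

lemma defence_mono : Monotone (defence R) := by
  intro S T hST a ha b hba
  obtain ⟨c, hc, hcb⟩ := ha b hba
  exact ⟨c, hST hc, hcb⟩

def dHom : Set A →o Set A := ⟨defence R, defence_mono R⟩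

noncomputable def grd : Set A := OrderHom.lfp (dHom R)

lemma grd_fixed : defence R (grd R) = grd R := OrderHom.map_lfp (dHom R)

lemma grd_le_prefixed {T : Set A} (h : defence R T ⊆ T) : grd R ⊆ T :=
  OrderHom.lfp_le (dHom R) h

lemma grd_cf : grd R ⊆ neutrality R (grd R) := by
  have h : defence R (grd R ∩ neutrality R (grd R)) ⊆ grd R ∩ neutrality R (grd R) := by
    intro a ha
    have haG : a ∈ grd R := by
      rw [← grd_fixed R]
      exact defence_mono R Set.inter_subset_left ha
    refine ⟨haG, ?_⟩
    rintro ⟨b, hbG, hba⟩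
    obtain ⟨c, ⟨hcG, hcn⟩, hcb⟩ := ha b hba
    have hbD : b ∈ defence R (grd R) := by rw [grd_fixed]; exact hbG
    exact hcn (hbD c hcb)
  exact fun a haG => (grd_le_prefixed R h haG).2

lemma grd_subsolution : subsolution R (grd R) :=
  ⟨grd_cf R, by rw [neut_neut, grd_fixed]⟩

lemma grd_le_subsolution {T : Set A} (h : subsolution R T) : grd R ⊆ T := by
  apply grd_le_prefixed
  rw [← neut_neut, ← h.2]

lemma grd_eq_sInter : ⋂₀ {S | subsolution R S} = grd R := by
  apply Set.Subset.antisymm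
  · exact Set.sInter_subset_of_mem (grd_subsolution R)
  · exact Set.subset_sInter fun T hT => grd_le_subsolution R hT

end Aux

/-- The supercore (intersection of all subsolutions) is itself a subsolution, is the
least one (hence the ⊆-least complete extension, i.e. the grounded extension), and
is the least fixed point of the defence function. -/
theorem supercore_eq_grounded {A : Type*} (R : A → A → Prop) :
    subsolution R (⋂₀ {S | subsolution R S}) ∧
    (∀ T, subsolution R T → ⋂₀ {S | subsolution R S} ⊆ T) ∧
    (∀ T, complete R T → ⋂₀ {S | subsolution R S} ⊆ T) ∧
    defence R (⋂₀ {S | subsolution R S}) = ⋂₀ {S | subsolution R S} ∧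
    (∀ T, defence R T = T → ⋂₀ {S | subsolution R S} ⊆ T) := by
  rw [grd_eq_sInter]
  refine ⟨grd_subsolution R, fun T hT => grd_le_subsolution R hT,
    fun T hT => grd_le_prefixed R hT.2.2, grd_fixed R,
    fun T hT => grd_le_prefixed R hT.subset⟩
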